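/- arXiv:0904.0157 — 2 statements merged into one kernel-verified Lean document; each statement's English description precedes it below -/
import Mathlib

section
/- Let Ω = Ω_1 × ⋯ × Ω_k be a product of finite sets and μ a pairwise independent probability distribution on Ω with marginals μ_i of full support. Let T ⊆ [k] with 1 ≤ |T| ≤ 2. Suppose g_i : Ω_i^n → ℂ for i ∉ T are functions not depending on the first coordinate, and for i ∈ T the functions h_i : Ω_i^n → ℂ satisfy E_{x_1 ∼ μ_i}[h_i(x_1, x_2, …, x_n)] = 0 for every fixed (x_2, …, x_n) (equivalently, ĥ_i(σ) = 0 whenever σ_1 = 0). Then E_X[∏_{i ∉ T} g_i(X_i) · ∏_{i ∈ T} h_i(X_i)] = 0, where X is a random k × n matrix whose columns are i.i.d. samples from μ and X_i is its i-th row. -/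
open Finset

/-- The marginal distribution of the `i`-th coordinate of a distribution `μ` on a
product of finite sets. -/
noncomputable def marg {k : ℕ} {Ω : Fin k → Type} [∀ i, Fintype (Ω i)]
    [∀ i, DecidableEq (Ω i)] (μ : (∀ i, Ω i) → ℝ) (i : Fin k) (a : Ω i) : ℝ :=
  ∑ x : ∀ j, Ω j, if x i = a then μ x else 0

/-- `μ` is pairwise independent: the joint distribution of any two distinct coordinates
is the product of the corresponding marginals. -/
def PairIndep {k : ℕ} {Ω : Fin k → Type} [∀ i, Fintype (Ω i)]
    [∀ i, DecidableEq (Ω i)] (μ : (∀ i, Ω i) → ℝ) : Prop :=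
  ∀ i j : Fin k, i ≠ j → ∀ (a : Ω i) (b : Ω j),
    (∑ x : ∀ l, Ω l, if x i = a ∧ x j = b then μ x else 0) = marg μ i a * marg μ j b

/-- `E[∏_i F_i(X_i)]`, where the `n` columns of the random matrix `X` are i.i.d. samples
from `μ` and `X_i` is the `i`-th row. -/
noncomputable def noiseProd {k n : ℕ} {Ω : Fin k → Type} [∀ i, Fintype (Ω i)]
    [∀ i, DecidableEq (Ω i)] (μ : (∀ i, Ω i) → ℝ)
    (f : ∀ i, (Fin n → Ω i) → ℂ) : ℂ :=
  ∑ X : Fin n → ∀ i, Ω i, (∏ j, (μ (X j) : ℂ)) * ∏ i, f i fun j => X j i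

lemma sum_single {k : ℕ} {Ω : Fin k → Type} [∀ i, Fintype (Ω i)]
    [∀ i, DecidableEq (Ω i)] (μ : (∀ i, Ω i) → ℝ) (i : Fin k) (H : Ω i → ℂ) :
    ∑ y : ∀ l, Ω l, (μ y : ℂ) * H (y i) = ∑ a, (marg μ i a : ℂ) * H a := by
  have hcast : ∀ a, ((marg μ i a : ℝ) : ℂ) = ∑ y : ∀ l, Ω l, if y i = a then (μ y : ℂ) else 0 := by
    intro a
    rw [marg]
    push_cast [apply_ite (fun r : ℝ => (r : ℂ))]
    rfl
  simp_rw [hcast, Finset.sum_mul, ite_mul, zero_mul]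
  rw [Finset.sum_comm]
  congr 1
  ext y
  simp

lemma sum_pair {k : ℕ} {Ω : Fin k → Type} [∀ i, Fintype (Ω i)]
    [∀ i, DecidableEq (Ω i)] (μ : (∀ i, Ω i) → ℝ) (hpi : PairIndep μ)
    (i j : Fin k) (hij : i ≠ j) (H : Ω i → ℂ) (G : Ω j → ℂ) :
    ∑ y : ∀ l, Ω l, (μ y : ℂ) * (H (y i) * G (y j))
      = (∑ a, (marg μ i a : ℂ) * H a) * (∑ b, (marg μ j b : ℂ) * G b) := by
  have hcast : ∀ a b, ((marg μ i a : ℝ) : ℂ) * ((marg μ j b : ℝ) : ℂ)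
      = ∑ y : ∀ l, Ω l, if y i = a ∧ y j = b then (μ y : ℂ) else 0 := by
    intro a b
    rw [← Complex.ofReal_mul, ← hpi i j hij a b]
    push_cast [apply_ite (fun r : ℝ => (r : ℂ))]
    rfl
  rw [Finset.sum_mul_sum]
  have key : ∀ (a : Ω i) (b : Ω j), (marg μ i a : ℂ) * H a * ((marg μ j b : ℂ) * G b)
      = ∑ y : ∀ l, Ω l, if y i = a ∧ y j = b then (μ y : ℂ) * (H a * G b) else 0 := by
    intro a b
    rw [mul_mul_mul_comm, hcast, Finset.sum_mul]
    simp [ite_mul]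
  simp_rw [key]
  have step1 : (∑ a : Ω i, ∑ b : Ω j, ∑ y : ∀ l, Ω l,
        if y i = a ∧ y j = b then (μ y : ℂ) * (H a * G b) else 0)
      = ∑ a : Ω i, ∑ y : ∀ l, Ω l, ∑ b : Ω j,
        if y i = a ∧ y j = b then (μ y : ℂ) * (H a * G b) else 0 :=
    Finset.sum_congr rfl fun a _ => Finset.sum_comm
  have step2 : (∑ a : Ω i, ∑ y : ∀ l, Ω l, ∑ b : Ω j,
        if y i = a ∧ y j = b then (μ y : ℂ) * (H a * G b) else 0)
      = ∑ y : ∀ l, Ω l, ∑ a : Ω i, ∑ b : Ω j,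
        if y i = a ∧ y j = b then (μ y : ℂ) * (H a * G b) else 0 :=
    Finset.sum_comm
  rw [step1, step2]
  congr 1
  ext y
  simp [ite_and, Finset.sum_ite_eq, Finset.sum_ite_eq']

/-- **Vanishing of the mixed terms** (the `1 ≤ |T| ≤ 2` case of the key lemma).
Let `μ` be pairwise independent with full-support marginals and `T ⊆ [k]` with
`1 ≤ |T| ≤ 2`.  If for `i ∉ T` the function `F i` does not depend on the first
coordinate, and for `i ∈ T` the function `F i` has conditional mean zero in the first
coordinate (for every fixed value of the remaining coordinates), then
`E_X[∏_{i ∉ T} F_i(X_i) · ∏_{i ∈ T} F_i(X_i)] = 0`. -/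
theorem mixed_term_vanishes
    {k n : ℕ} (hn : 0 < n)
    (Ω : Fin k → Type) [∀ i, Fintype (Ω i)] [∀ i, DecidableEq (Ω i)]
    (μ : (∀ i, Ω i) → ℝ)
    (hμ0 : ∀ x, 0 ≤ μ x) (hμ1 : ∑ x : ∀ i, Ω i, μ x = 1)
    (hfull : ∀ i a, 0 < marg μ i a)
    (hpi : PairIndep μ)
    (T : Finset (Fin k)) (hT1 : 1 ≤ T.card) (hT2 : T.card ≤ 2)
    (F : ∀ i, (Fin n → Ω i) → ℂ)
    (hg : ∀ i ∉ T, ∀ x x' : Fin n → Ω i,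
      (∀ j : Fin n, j ≠ ⟨0, hn⟩ → x j = x' j) → F i x = F i x')
    (hh : ∀ i ∈ T, ∀ x : Fin n → Ω i,
      ∑ a : Ω i, (marg μ i a : ℂ) * F i (Function.update x ⟨0, hn⟩ a) = 0) :
    noiseProd μ F = 0 := by
  classical
  set j0 : Fin n := ⟨0, hn⟩ with hj0def
  -- the product space is nonempty
  have hne : Nonempty (∀ i, Ω i) := by
    by_contra h
    rw [not_nonempty_iff] at h
    rw [Finset.univ_eq_empty, Finset.sum_empty] at hμ1
    norm_num at hμ1
  obtain ⟨x₀⟩ := hne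
  set e := Equiv.funSplitAt j0 (∀ i, Ω i) with he
  have hesymm : ∀ (y : ∀ i, Ω i) (r : {j // j ≠ j0} → ∀ i, Ω i) (j : Fin n),
      e.symm (y, r) j = if h : j = j0 then y else r ⟨j, h⟩ := by
    intro y r j
    simp [he, Equiv.funSplitAt, Equiv.piSplitAt]
  rw [noiseProd,
    ← Equiv.sum_comp e.symm (fun X => (∏ j, (μ (X j) : ℂ)) * ∏ i, F i fun j => X j i),
    Fintype.sum_prod_type, Finset.sum_comm]
  apply Finset.sum_eq_zero
  intro r _
  -- fixed remaining columns `r`; set up notation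
  set w : ∀ i, Fin n → Ω i := fun i jj => if h : jj = j0 then x₀ i else r ⟨jj, h⟩ i with hw
  set Hf : ∀ i, Ω i → ℂ := fun i a => F i (Function.update (w i) j0 a) with hHf
  set P : ℂ := ∏ j ∈ Finset.univ.erase j0, (μ (e.symm (x₀, r) j) : ℂ) with hP
  set C : ℂ := ∏ i ∈ Tᶜ, F i (w i) with hC
  have hrow : ∀ (y : ∀ i, Ω i) (i : Fin k),
      (fun jj => e.symm (y, r) jj i) = Function.update (w i) j0 (y i) := by
    intro y i
    funext jj
    by_cases h : jj = j0
    · subst h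
      rw [hesymm, Function.update_self, dif_pos rfl]
    · rw [hesymm, Function.update_of_ne h, dif_neg h, hw]
      simp [h]
  have hmu : ∀ y : ∀ i, Ω i, (∏ j, (μ (e.symm (y, r) j) : ℂ)) = (μ y : ℂ) * P := by
    intro y
    rw [← Finset.mul_prod_erase Finset.univ _ (Finset.mem_univ j0),
      show e.symm (y, r) j0 = y from by rw [hesymm]; simp]
    congr 1
    rw [hP]
    apply Finset.prod_congr rfl
    intro j hj
    have hj' : j ≠ j0 := (Finset.mem_erase.mp hj).1
    rw [hesymm, hesymm, dif_neg hj', dif_neg hj']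
  have hterm : ∀ y : ∀ i, Ω i,
      (∏ j, (μ (e.symm (y, r) j) : ℂ)) * ∏ i, F i (fun jj => e.symm (y, r) jj i)
        = (P * C) * ((μ y : ℂ) * ∏ i ∈ T, Hf i (y i)) := by
    intro y
    rw [hmu y]
    have hFs : (∏ i, F i fun jj => e.symm (y, r) jj i)
        = (∏ i ∈ T, Hf i (y i)) * C := by
      rw [← Finset.prod_mul_prod_compl T (fun i => F i fun jj => e.symm (y, r) jj i)]
      congr 1
      · apply Finset.prod_congr rfl
        intro i _
        rw [hrow y i, hHf]
      · rw [hC]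
        apply Finset.prod_congr rfl
        intro i hi
        rw [hrow y i]
        apply hg i (by simpa using hi)
        intro j hjne
        rw [Function.update_of_ne hjne]
    rw [hFs]
    ring
  simp_rw [hterm]
  rw [← Finset.mul_sum]
  have hzero : (∑ y : ∀ i, Ω i, (μ y : ℂ) * ∏ i ∈ T, Hf i (y i)) = 0 := by
    have hcard : T.card = 1 ∨ T.card = 2 := by omega
    rcases hcard with h1 | h2
    · obtain ⟨i0, rfl⟩ := Finset.card_eq_one.mp h1
      simp_rw [Finset.prod_singleton]
      rw [sum_single μ i0 (Hf i0)]
      exact hh i0 (Finset.mem_singleton_self i0) (w i0)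
    · obtain ⟨i0, i1, hne01, rfl⟩ := Finset.card_eq_two.mp h2
      simp_rw [Finset.prod_pair hne01]
      rw [sum_pair μ hpi i0 i1 hne01 (Hf i0) (Hf i1),
        show (∑ a, (marg μ i0 a : ℂ) * Hf i0 a) = 0 from
          hh i0 (Finset.mem_insert_self i0 {i1}) (w i0), zero_mul]
  rw [hzero, mul_zero]
end

section
/- Let Ω = Ω_1 × ⋯ × Ω_k be a product of finite sets and μ a probability distribution on Ω with marginals μ_i of full support. Let f_1, …, f_k be functions f_i : Ω_i^n → ℂ satisfying ‖f_i‖_k ≤ 1 and ‖f_i^{>d}‖_k ≤ ε for all i, for some integer d ≥ 0 and ε > 0. Then |⟨f_1, …, f_k⟩_μ − ⟨f_1^{≤d}, …, f_k^{≤d}⟩_μ| ≤ k·ε·(1+ε)^{k−1}, where f^{≤d} = Σ_{|σ| ≤ d} f̂(σ)χ_σ and f^{>d} = f − f^{≤d} are the low- and high-degree parts of f. -/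
open Finset ComplexConjugate

/-- The Fourier coefficient `f̂(σ) = E[f ⬝ conj χ_σ]` of `f : Ω^n → ℂ` with respect to the
weight `ν` on `Ω` (used with the product weight `ν^{⊗n}`) and the basis `χ_0, …, χ_{q-1}`. -/
noncomputable def fCoeff {Ω : Type} [Fintype Ω] {q n : ℕ} (ν : Ω → ℝ)
    (χ : Fin q → Ω → ℂ) (f : (Fin n → Ω) → ℂ) (σ : Fin n → Fin q) : ℂ :=
  ∑ x : Fin n → Ω, (∏ j, (ν (x j) : ℂ)) * (f x * conj (∏ j, χ (σ j) (x j)))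

/-- `|σ|`, the size of the support of a multi-index `σ`. -/
def suppCard {q n : ℕ} [NeZero q] (σ : Fin n → Fin q) : ℕ :=
  (Finset.univ.filter fun j => σ j ≠ 0).card

open scoped Classical in
/-- The Fourier degree of `f`: the largest `|σ|` over multi-indices `σ` with `f̂(σ) ≠ 0`. -/
noncomputable def fDeg {Ω : Type} [Fintype Ω] {q n : ℕ} [NeZero q] (ν : Ω → ℝ)
    (χ : Fin q → Ω → ℂ) (f : (Fin n → Ω) → ℂ) : ℕ :=
  (Finset.univ.filter fun σ : Fin n → Fin q => fCoeff ν χ f σ ≠ 0).sup suppCard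

/-- The `ℓ₂` norm of `f : Ω^n → ℂ` with respect to the product weight `ν^{⊗n}`. -/
noncomputable def l2norm {Ω : Type} [Fintype Ω] {n : ℕ} (ν : Ω → ℝ)
    (f : (Fin n → Ω) → ℂ) : ℝ :=
  Real.sqrt (∑ x : Fin n → Ω, (∏ j, ν (x j)) * ‖f x‖ ^ 2)

/-- The `ℓ_k` norm `(E[|f|^k])^{1/k}` of `f : Ω^n → ℂ` under the product weight `ν^{⊗n}`. -/
noncomputable def lkNorm {Ω : Type} [Fintype Ω] {n : ℕ} (ν : Ω → ℝ) (k : ℕ)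
    (f : (Fin n → Ω) → ℂ) : ℝ :=
  (∑ x : Fin n → Ω, (∏ j, ν (x j)) * ‖f x‖ ^ k) ^ ((k : ℝ)⁻¹)

/-- The low-degree part `f^{≤ d} = Σ_{|σ| ≤ d} f̂(σ) χ_σ` of `f`. -/
noncomputable def lowPart {Ω : Type} [Fintype Ω] {q n : ℕ} [NeZero q] (ν : Ω → ℝ)
    (χ : Fin q → Ω → ℂ) (f : (Fin n → Ω) → ℂ) (d : ℕ) : (Fin n → Ω) → ℂ :=
  fun x => ∑ σ ∈ Finset.univ.filter (fun σ : Fin n → Fin q => suppCard σ ≤ d),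
    fCoeff ν χ f σ * ∏ j, χ (σ j) (x j)


/-- Generalized Hölder: `∑ₓ ∏ᵢ aᵢ(x) ≤ ∏ᵢ (∑ₓ aᵢ(x)^k)^(1/k)` for `k` nonnegative functions. -/
lemma multi_holder {k : ℕ} (hk : 1 ≤ k) {X : Type} [Fintype X] (a : Fin k → X → ℝ)
    (ha : ∀ i x, 0 ≤ a i x) :
    ∑ x : X, ∏ i, a i x ≤ ∏ i, (∑ x : X, a i x ^ k) ^ ((k : ℝ)⁻¹) := by
  have hk0 : k ≠ 0 := by omega
  have hkR : (k : ℝ) ≠ 0 := Nat.cast_ne_zero.2 hk0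
  set S : Fin k → ℝ := fun i => (∑ x : X, a i x ^ k) ^ ((k : ℝ)⁻¹) with hS
  have hsumnn : ∀ i, 0 ≤ ∑ x : X, a i x ^ k :=
    fun i => Finset.sum_nonneg fun x _ => pow_nonneg (ha i x) _
  have hSnn : ∀ i, 0 ≤ S i := fun i => Real.rpow_nonneg (hsumnn i) _
  by_cases hz : ∃ i, S i = 0
  · obtain ⟨i0, hi0⟩ := hz
    have hsum : ∑ x : X, a i0 x ^ k = 0 := by
      by_contra h
      have hpos : 0 < ∑ x : X, a i0 x ^ k := lt_of_le_of_ne (hsumnn i0) (Ne.symm h)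
      exact (ne_of_gt (Real.rpow_pos_of_pos hpos _)) hi0
    have hzero : ∀ x, a i0 x = 0 := by
      intro x
      have := (Finset.sum_eq_zero_iff_of_nonneg
        (fun y _ => pow_nonneg (ha i0 y) k)).1 hsum x (mem_univ x)
      exact pow_eq_zero_iff hk0 |>.1 this
    have hL : ∑ x : X, ∏ i, a i x = 0 :=
      Finset.sum_eq_zero fun x _ => Finset.prod_eq_zero (mem_univ i0) (hzero x)
    rw [hL]
    exact Finset.prod_nonneg fun i _ => hSnn i
  · push_neg at hz
    have hSpos : ∀ i, 0 < S i := fun i => lt_of_le_of_ne (hSnn i) (Ne.symm (hz i))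
    have hSk : ∀ i, S i ^ k = ∑ x : X, a i x ^ k := fun i =>
      Real.rpow_inv_natCast_pow (hsumnn i) hk0
    have key : ∀ x, ∏ i, (a i x / S i) ≤ ∑ i, (k : ℝ)⁻¹ * (a i x / S i) ^ k := by
      intro x
      have hb : ∀ i ∈ (univ : Finset (Fin k)), 0 ≤ (a i x / S i) ^ k :=
        fun i _ => pow_nonneg (div_nonneg (ha i x) (hSnn i)) _
      have := Real.geom_mean_le_arith_mean_weighted univ (fun _ => (k : ℝ)⁻¹)
        (fun i => (a i x / S i) ^ k)
        (fun i _ => by positivity) (by simp [Finset.card_univ, hkR]) hb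
      calc ∏ i, (a i x / S i)
          = ∏ i, ((a i x / S i) ^ k) ^ ((k : ℝ)⁻¹) := by
            refine Finset.prod_congr rfl fun i _ => ?_
            rw [Real.pow_rpow_inv_natCast (div_nonneg (ha i x) (hSnn i)) hk0]
        _ ≤ ∑ i, (k : ℝ)⁻¹ * (a i x / S i) ^ k := this
    have hmain : ∑ x : X, ∏ i, (a i x / S i) ≤ 1 := by
      calc ∑ x : X, ∏ i, (a i x / S i)
          ≤ ∑ x : X, ∑ i, (k : ℝ)⁻¹ * (a i x / S i) ^ k :=
            Finset.sum_le_sum fun x _ => key x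
        _ = ∑ i, (k : ℝ)⁻¹ * ((∑ x : X, a i x ^ k) / S i ^ k) := by
            rw [Finset.sum_comm]
            refine Finset.sum_congr rfl fun i _ => ?_
            rw [← Finset.mul_sum]
            congr 1
            rw [Finset.sum_div]
            exact Finset.sum_congr rfl fun x _ => by rw [div_pow]
        _ = ∑ i : Fin k, (k : ℝ)⁻¹ := by
            refine Finset.sum_congr rfl fun i _ => ?_
            rw [hSk i, div_self (by rw [← hSk i]; exact ne_of_gt (pow_pos (hSpos i) k)), mul_one]
        _ = 1 := by simp [Finset.card_univ, hkR]
    have hprodS : 0 < ∏ i, S i := Finset.prod_pos fun i _ => hSpos i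
    have : ∑ x : X, ∏ i, a i x = (∑ x : X, ∏ i, (a i x / S i)) * ∏ i, S i := by
      rw [Finset.sum_mul]
      refine Finset.sum_congr rfl fun x _ => ?_
      rw [Finset.prod_div_distrib, div_mul_cancel₀]
      exact ne_of_gt hprodS
    rw [this]
    calc (∑ x : X, ∏ i, (a i x / S i)) * ∏ i, S i ≤ 1 * ∏ i, S i :=
          mul_le_mul_of_nonneg_right hmain (le_of_lt hprodS)
      _ = ∏ i, S i := one_mul _

/-- Marginalization: averaging a function of the `i`-th row against the product distribution
`μ^{⊗n}` is the same as averaging against the product marginal. -/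
lemma marg_sum {k n : ℕ} {Ω : Fin k → Type} [∀ i, Fintype (Ω i)] [∀ i, DecidableEq (Ω i)]
    (μ : (∀ i, Ω i) → ℝ) (i : Fin k) (h : (Fin n → Ω i) → ℝ) :
    ∑ X : Fin n → ∀ l, Ω l, (∏ j, μ (X j)) * h (fun j => X j i)
      = ∑ x : Fin n → Ω i, (∏ j, marg μ i (x j)) * h x := by
  classical
  rw [← Finset.sum_fiberwise (univ : Finset (Fin n → ∀ l, Ω l))
    (fun X => (fun j => X j i : Fin n → Ω i)) (fun X => (∏ j, μ (X j)) * h (fun j => X j i))]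
  refine Finset.sum_congr rfl fun x _ => ?_
  have hfib : ∀ X ∈ Finset.univ.filter
      (fun X : Fin n → ∀ l, Ω l => (fun j => X j i) = x),
      (∏ j, μ (X j)) * h (fun j => X j i) = (∏ j, μ (X j)) * h x := by
    intro X hX
    rw [(Finset.mem_filter.1 hX).2]
  rw [Finset.sum_congr rfl hfib, ← Finset.sum_mul]
  congr 1
  have : ∑ X ∈ Finset.univ.filter
      (fun X : Fin n → ∀ l, Ω l => (fun j => X j i) = x), ∏ j, μ (X j)
      = ∑ X : Fin n → ∀ l, Ω l, ∏ j, (if X j i = x j then μ (X j) else 0) := by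
    rw [Finset.sum_filter]
    refine Finset.sum_congr rfl fun X _ => ?_
    by_cases hX : (fun j => X j i) = x
    · rw [if_pos hX]
      refine (Finset.prod_congr rfl fun j _ => ?_).symm
      rw [if_pos (congrFun hX j)]
    · rw [if_neg hX]
      obtain ⟨j0, hj0⟩ : ∃ j, X j i ≠ x j := by
        by_contra hc
        push_neg at hc
        exact hX (funext hc)
      exact (Finset.prod_eq_zero (mem_univ j0) (if_neg hj0 : (if X j0 i = x j0 then μ (X j0) else 0) = 0)).symm
  rw [this, ← Fintype.prod_sum (fun (j : Fin n) (y : ∀ l, Ω l) =>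
    if y i = x j then μ y else 0)]
  rfl



lemma lkNorm_nonneg {Ω : Type} [Fintype Ω] {n : ℕ} {ν : Ω → ℝ} (hν : ∀ a, 0 ≤ ν a)
    (k : ℕ) (f : (Fin n → Ω) → ℂ) : 0 ≤ lkNorm ν k f :=
  Real.rpow_nonneg (Finset.sum_nonneg fun x _ => mul_nonneg
    (Finset.prod_nonneg fun j _ => hν (x j)) (pow_nonneg (norm_nonneg _) _)) _

/-- Weighted Minkowski inequality for `lkNorm`. -/
lemma lkNorm_add_le {Ω : Type} [Fintype Ω] {n k : ℕ} (hk : 1 ≤ k) (ν : Ω → ℝ)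
    (hν : ∀ a, 0 ≤ ν a) (g h : (Fin n → Ω) → ℂ) :
    lkNorm ν k (fun x => g x + h x) ≤ lkNorm ν k g + lkNorm ν k h := by
  have hk0 : k ≠ 0 := by omega
  have hwnn : ∀ x : Fin n → Ω, 0 ≤ ∏ j, ν (x j) :=
    fun x => Finset.prod_nonneg fun j _ => hν (x j)
  set w : (Fin n → Ω) → ℝ := fun x => (∏ j, ν (x j)) ^ ((k : ℝ)⁻¹) with hw
  have hwp : ∀ x, 0 ≤ w x := fun x => Real.rpow_nonneg (hwnn x) _
  have hwk : ∀ x, w x ^ k = ∏ j, ν (x j) :=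
    fun x => Real.rpow_inv_natCast_pow (hwnn x) hk0
  set F : (Fin n → Ω) → ℝ := fun x => w x * ‖g x‖ with hF
  set G : (Fin n → Ω) → ℝ := fun x => w x * ‖h x‖ with hG
  have hFnn : ∀ x, 0 ≤ F x := fun x => mul_nonneg (hwp x) (norm_nonneg _)
  have hGnn : ∀ x, 0 ≤ G x := fun x => mul_nonneg (hwp x) (norm_nonneg _)
  have hone : (1 : ℝ) ≤ (k : ℝ) := by exact_mod_cast hk
  have hmink := Real.Lp_add_le (univ : Finset (Fin n → Ω)) F G hone
  have e1 : ∀ (u : (Fin n → Ω) → ℝ) (hu : ∀ x, 0 ≤ u x),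
      ∑ x : Fin n → Ω, |u x| ^ (k : ℝ) = ∑ x : Fin n → Ω, u x ^ k := by
    intro u hu
    refine Finset.sum_congr rfl fun x _ => ?_
    rw [abs_of_nonneg (hu x), ← Real.rpow_natCast (u x) k]
  have eF : ∑ x : Fin n → Ω, |F x| ^ (k : ℝ)
      = ∑ x : Fin n → Ω, (∏ j, ν (x j)) * ‖g x‖ ^ k := by
    rw [e1 F hFnn]
    refine Finset.sum_congr rfl fun x _ => ?_
    rw [hF, mul_pow, hwk x]
  have eG : ∑ x : Fin n → Ω, |G x| ^ (k : ℝ)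
      = ∑ x : Fin n → Ω, (∏ j, ν (x j)) * ‖h x‖ ^ k := by
    rw [e1 G hGnn]
    refine Finset.sum_congr rfl fun x _ => ?_
    rw [hG, mul_pow, hwk x]
  have eFG : ∑ x : Fin n → Ω, (∏ j, ν (x j)) * ‖g x + h x‖ ^ k
      ≤ ∑ x : Fin n → Ω, |F x + G x| ^ (k : ℝ) := by
    rw [e1 (fun x => F x + G x) (fun x => add_nonneg (hFnn x) (hGnn x))]
    refine Finset.sum_le_sum fun x _ => ?_
    have habs : ‖g x + h x‖ ≤ ‖g x‖ + ‖h x‖ :=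
      norm_add_le _ _
    calc (∏ j, ν (x j)) * ‖g x + h x‖ ^ k
        ≤ (∏ j, ν (x j)) * (‖g x‖ + ‖h x‖) ^ k := by
          refine mul_le_mul_of_nonneg_left ?_ (hwnn x)
          exact pow_le_pow_left₀ (norm_nonneg _) habs k
      _ = (F x + G x) ^ k := by rw [hF, hG, ← mul_add, mul_pow, hwk x]
  have h1k : 0 ≤ (k : ℝ)⁻¹ := by positivity
  calc lkNorm ν k (fun x => g x + h x)
      ≤ (∑ x : Fin n → Ω, |F x + G x| ^ (k : ℝ)) ^ ((k : ℝ)⁻¹) := by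
        unfold lkNorm
        exact Real.rpow_le_rpow (Finset.sum_nonneg fun x _ => mul_nonneg (hwnn x)
          (pow_nonneg (norm_nonneg _) _)) eFG h1k
    _ ≤ (∑ x : Fin n → Ω, |F x| ^ (k : ℝ)) ^ ((k : ℝ)⁻¹)
        + (∑ x : Fin n → Ω, |G x| ^ (k : ℝ)) ^ ((k : ℝ)⁻¹) := by
        have := hmink
        rw [one_div] at this
        exact this
    _ = lkNorm ν k g + lkNorm ν k h := by
        unfold lkNorm
        rw [eF, eG]

/-- Hölder's inequality for the noisy inner product. -/
lemma noiseProd_holder {k n : ℕ} (hk : 1 ≤ k) {Ω : Fin k → Type} [∀ i, Fintype (Ω i)]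
    [∀ i, DecidableEq (Ω i)] (μ : (∀ i, Ω i) → ℝ) (hμ0 : ∀ x, 0 ≤ μ x)
    (g : ∀ i, (Fin n → Ω i) → ℂ) :
    ‖noiseProd μ g‖ ≤ ∏ i, lkNorm (marg μ i) k (g i) := by
  have hk0 : k ≠ 0 := by omega
  have hwnn : ∀ X : Fin n → ∀ l, Ω l, 0 ≤ ∏ j, μ (X j) :=
    fun X => Finset.prod_nonneg fun j _ => hμ0 (X j)
  set a : Fin k → (Fin n → ∀ l, Ω l) → ℝ := fun i X =>
    (∏ j, μ (X j)) ^ ((k : ℝ)⁻¹) * ‖g i fun j => X j i‖ with ha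
  have hann : ∀ i X, 0 ≤ a i X :=
    fun i X => mul_nonneg (Real.rpow_nonneg (hwnn X) _) (norm_nonneg _)
  have step1 : ‖noiseProd μ g‖
      ≤ ∑ X : Fin n → ∀ l, Ω l, ∏ i, a i X := by
    refine le_trans (norm_sum_le _ _) (Finset.sum_le_sum fun X _ => ?_)
    rw [norm_mul, norm_prod]
    have hcast : ∀ j, ‖(μ (X j) : ℂ)‖ = μ (X j) := fun j => by
      rw [Complex.norm_real, Real.norm_eq_abs, abs_of_nonneg (hμ0 (X j))]
    rw [Finset.prod_congr rfl fun j _ => hcast j, norm_prod]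
    have : ∏ i, a i X = (∏ j, μ (X j)) * ∏ i, ‖g i fun j => X j i‖ := by
      rw [ha, Finset.prod_mul_distrib, Finset.prod_const, Finset.card_univ,
        Fintype.card_fin, Real.rpow_inv_natCast_pow (hwnn X) hk0]
    rw [this]
  have step2 : ∑ X : Fin n → ∀ l, Ω l, ∏ i, a i X
      ≤ ∏ i, (∑ X : Fin n → ∀ l, Ω l, a i X ^ k) ^ ((k : ℝ)⁻¹) :=
    multi_holder hk a hann
  have step3 : ∀ i, (∑ X : Fin n → ∀ l, Ω l, a i X ^ k) ^ ((k : ℝ)⁻¹)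
      = lkNorm (marg μ i) k (g i) := by
    intro i
    have : ∑ X : Fin n → ∀ l, Ω l, a i X ^ k
        = ∑ x : Fin n → Ω i, (∏ j, marg μ i (x j)) * ‖g i x‖ ^ k := by
      rw [← marg_sum μ i (fun x => ‖g i x‖ ^ k)]
      refine Finset.sum_congr rfl fun X _ => ?_
      rw [ha, mul_pow, Real.rpow_inv_natCast_pow (hwnn X) hk0]
    rw [this]
    rfl
  calc ‖noiseProd μ g‖ ≤ ∑ X : Fin n → ∀ l, Ω l, ∏ i, a i X := step1
    _ ≤ ∏ i, (∑ X : Fin n → ∀ l, Ω l, a i X ^ k) ^ ((k : ℝ)⁻¹) := step2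
    _ = ∏ i, lkNorm (marg μ i) k (g i) := Finset.prod_congr rfl fun i _ => step3 i

/-- `noiseProd` is multilinear: difference in one slot. -/
lemma noiseProd_diff {k n : ℕ} {Ω : Fin k → Type} [∀ i, Fintype (Ω i)]
    [∀ i, DecidableEq (Ω i)] (μ : (∀ i, Ω i) → ℝ) (g h : ∀ i, (Fin n → Ω i) → ℂ)
    (i₀ : Fin k) (hgh : ∀ i, i ≠ i₀ → g i = h i) :
    noiseProd μ g - noiseProd μ h
      = noiseProd μ (fun i => if hi : i = i₀ then
          (fun x => g i x - h i x) else g i) := by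
  unfold noiseProd
  rw [← Finset.sum_sub_distrib]
  refine Finset.sum_congr rfl fun X _ => ?_
  rw [← mul_sub]
  congr 1
  have key : ∀ (u : ∀ i, (Fin n → Ω i) → ℂ),
      ∏ i, u i (fun j => X j i)
        = u i₀ (fun j => X j i₀) * ∏ i ∈ univ.erase i₀, u i (fun j => X j i) := by
    intro u
    rw [← Finset.prod_erase_mul univ _ (mem_univ i₀), mul_comm]
  rw [key g, key h,
    key (fun i => if hi : i = i₀ then (fun x => g i x - h i x) else g i)]
  have he : ∀ i ∈ univ.erase i₀,
      (if hi : i = i₀ then (fun x => g i x - h i x) else g i) (fun j => X j i)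
        = g i (fun j => X j i) := by
    intro i hi
    rw [dif_neg (Finset.ne_of_mem_erase hi)]
  have he2 : ∀ i ∈ univ.erase i₀, h i (fun j => X j i) = g i (fun j => X j i) := by
    intro i hi
    rw [hgh i (Finset.ne_of_mem_erase hi)]
  rw [Finset.prod_congr rfl he, Finset.prod_congr rfl he2, dif_pos rfl, ← sub_mul]


/-- **Proposition (Hölder truncation).**  Let `μ` be a probability distribution on
`Ω_1 × ⋯ × Ω_k` with full-support marginals, and `f_1, …, f_k` functions with
`‖f_i‖_k ≤ 1` and `‖f_i^{>d}‖_k ≤ ε`.  Then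
`|⟨f_1, …, f_k⟩_μ − ⟨f_1^{≤d}, …, f_k^{≤d}⟩_μ| ≤ k·ε·(1+ε)^{k-1}`, where
`f^{>d} = f − f^{≤d}`. -/
theorem noise_correlation_holder_truncation
    {k n q : ℕ} (hk : 1 ≤ k) [NeZero q]
    (Ω : Fin k → Type) [∀ i, Fintype (Ω i)] [∀ i, DecidableEq (Ω i)]
    (hcard : ∀ i, Fintype.card (Ω i) = q)
    (μ : (∀ i, Ω i) → ℝ)
    (hμ0 : ∀ x, 0 ≤ μ x) (hμ1 : ∑ x : ∀ i, Ω i, μ x = 1)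
    (hfull : ∀ i a, 0 < marg μ i a)
    (χ : ∀ i, Fin q → Ω i → ℂ)
    (hχ0 : ∀ i, χ i 0 = fun _ => 1)
    (hχorth : ∀ i (s t : Fin q),
      ∑ a : Ω i, (marg μ i a : ℂ) * (χ i s a * conj (χ i t a)) = if s = t then 1 else 0)
    (f : ∀ i, (Fin n → Ω i) → ℂ)
    (d : ℕ) (ε : ℝ) (hε : 0 < ε)
    (hfk : ∀ i, lkNorm (marg μ i) k (f i) ≤ 1)
    (hhigh : ∀ i, lkNorm (marg μ i) k
      (fun x => f i x - lowPart (marg μ i) (χ i) (f i) d x) ≤ ε) :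
    ‖noiseProd μ f -
        noiseProd μ (fun i => lowPart (marg μ i) (χ i) (f i) d)‖ ≤
      (k : ℝ) * ε * (1 + ε) ^ (k - 1) := by
    classical
  set L : ∀ i, (Fin n → Ω i) → ℂ := fun i => lowPart (marg μ i) (χ i) (f i) d with hL
  have hmargnn : ∀ i a, 0 ≤ marg μ i a := fun i a => (hfull i a).le
  have hLnorm : ∀ i, lkNorm (marg μ i) k (L i) ≤ 1 + ε := by
    intro i
    have heq : L i = fun x => f i x + (L i x - f i x) := funext fun x => by ring
    calc lkNorm (marg μ i) k (L i)
        = lkNorm (marg μ i) k (fun x => f i x + (L i x - f i x)) := by rw [← heq]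
      _ ≤ lkNorm (marg μ i) k (f i) + lkNorm (marg μ i) k (fun x => L i x - f i x) :=
          lkNorm_add_le hk _ (hmargnn i) _ _
      _ ≤ 1 + ε := by
          have heq2 : lkNorm (marg μ i) k (fun x => L i x - f i x)
              = lkNorm (marg μ i) k (fun x => f i x - L i x) := by
            unfold lkNorm
            congr 1
            refine Finset.sum_congr rfl fun x _ => ?_
            rw [norm_sub_rev]
          rw [heq2]
          exact add_le_add (hfk i) (hhigh i)
  have hfnorm : ∀ i, lkNorm (marg μ i) k (f i) ≤ 1 + ε :=
    fun i => le_trans (hfk i) (by linarith)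
  set G : ℕ → ∀ i, (Fin n → Ω i) → ℂ :=
    fun m i => if (i : ℕ) < m then L i else f i with hG
  have hG0 : G 0 = f := funext fun i => if_neg (Nat.not_lt_zero _)
  have hGk : G k = L := funext fun i => if_pos i.isLt
  have htele : noiseProd μ f - noiseProd μ L
      = ∑ m ∈ Finset.range k, (noiseProd μ (G m) - noiseProd μ (G (m + 1))) := by
    rw [Finset.sum_range_sub' (fun m => noiseProd μ (G m)), hG0, hGk]
  have hstep : ∀ m, m < k → ‖noiseProd μ (G m) - noiseProd μ (G (m + 1))‖
      ≤ ε * (1 + ε) ^ (k - 1) := by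
    intro m hm
    set i₀ : Fin k := ⟨m, hm⟩ with hi₀
    have hagree : ∀ i, i ≠ i₀ → G m i = G (m + 1) i := by
      intro i hi
      have hne : (i : ℕ) ≠ m := fun hc => hi (Fin.ext hc)
      simp only [hG]
      by_cases hlt : (i : ℕ) < m
      · rw [if_pos hlt, if_pos (Nat.lt_succ_of_lt hlt)]
      · rw [if_neg hlt, if_neg (by omega)]
    have hdiff := noiseProd_diff μ (G m) (G (m + 1)) i₀ hagree
    rw [hdiff]
    set T : ∀ i, (Fin n → Ω i) → ℂ := fun i => if hi : i = i₀ then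
      (fun x => G m i x - G (m + 1) i x) else G m i with hT
    have h1 : G m i₀ = f i₀ := by simp [hG, hi₀]
    have h2 : G (m + 1) i₀ = L i₀ := by simp [hG, hi₀]
    have hTi0eq : T i₀ = fun x => f i₀ x - L i₀ x := by
      simp only [hT, dif_pos]
      rw [h1, h2]
    calc ‖noiseProd μ T‖ ≤ ∏ i, lkNorm (marg μ i) k (T i) :=
          noiseProd_holder hk μ hμ0 T
      _ ≤ ε * (1 + ε) ^ (k - 1) := by
          rw [← Finset.prod_erase_mul univ _ (mem_univ i₀), mul_comm]
          have hTi₀ : lkNorm (marg μ i₀) k (T i₀) ≤ ε := by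
            rw [hTi0eq]
            exact hhigh i₀
          have hrest : ∏ i ∈ univ.erase i₀, lkNorm (marg μ i) k (T i)
              ≤ (1 + ε) ^ (k - 1) := by
            calc ∏ i ∈ univ.erase i₀, lkNorm (marg μ i) k (T i)
                ≤ ∏ _i ∈ univ.erase i₀, (1 + ε) := by
                  refine Finset.prod_le_prod
                    (fun i _ => lkNorm_nonneg (hmargnn i) _ _) ?_
                  intro i hi
                  have hTieq : T i = G m i := by
                    simp only [hT]
                    rw [dif_neg (Finset.ne_of_mem_erase hi)]
                  rw [hTieq]
                  simp only [hG]
                  by_cases hlt : (i : ℕ) < m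
                  · rw [if_pos hlt]; exact hLnorm i
                  · rw [if_neg hlt]; exact hfnorm i
              _ = (1 + ε) ^ (k - 1) := by
                  rw [Finset.prod_const, Finset.card_erase_of_mem (mem_univ i₀),
                    Finset.card_univ, Fintype.card_fin]
          exact mul_le_mul hTi₀ hrest
            (Finset.prod_nonneg fun i _ => lkNorm_nonneg (hmargnn i) _ _) (le_of_lt hε)
  calc ‖noiseProd μ f - noiseProd μ L‖
      = ‖∑ m ∈ Finset.range k,
          (noiseProd μ (G m) - noiseProd μ (G (m + 1)))‖ := by rw [htele]
    _ ≤ ∑ m ∈ Finset.range k,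
          ‖noiseProd μ (G m) - noiseProd μ (G (m + 1))‖ :=
        norm_sum_le _ _
    _ ≤ ∑ _m ∈ Finset.range k, ε * (1 + ε) ^ (k - 1) :=
        Finset.sum_le_sum fun m hm => hstep m (Finset.mem_range.1 hm)
    _ = (k : ℝ) * ε * (1 + ε) ^ (k - 1) := by
        rw [Finset.sum_const, Finset.card_range, nsmul_eq_mul, mul_assoc]
end
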